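/- arXiv:2007.14679 — 2 statements merged into one kernel-verified Lean document; each statement's English description precedes it below -/
import Mathlib

section
/- Let p ∈ ℝ², p ≠ 0, and p_BS = 0. Given θ ∈ ℝ with cos θ ≠ 0 and d > ‖p‖ such that there exists a point s on the ray {t(cos θ, sin θ) : t > 0} with ‖s‖ + ‖p − s‖ = d, and s_x > 0, then s is given in closed form by s_x = (1/2)(d² − p_x² − p_y²) / (√(1 + tan²θ) · d − p_x − tan θ · p_y) and s_y = tan θ · s_x. -/
/-- The Euclidean norm on `ℝ × ℝ`. -/
noncomputable def enorm2 (v : ℝ × ℝ) : ℝ := Real.sqrt (v.1 ^ 2 + v.2 ^ 2)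

/-- Closed-form mapping of a scatterer.  The BS is at the origin; if the
scatterer `s` lies on the ray with angle `θ` (with `cos θ > 0`, so `s_x > 0`),
and the total path length from BS to `s` to the user `p` is `d > ‖p‖`, then
`s_x = (1/2)(d² − p_x² − p_y²)/(√(1 + tan²θ)·d − p_x − tan θ·p_y)` and
`s_y = tan θ · s_x`. -/
theorem stmt_5 (p s : ℝ × ℝ) (θ d t : ℝ)
    (hp : p ≠ 0) (hcos : 0 < Real.cos θ) (hd : enorm2 p < d)
    (ht : 0 < t) (hs : s = (t * Real.cos θ, t * Real.sin θ))
    (hsum : enorm2 s + enorm2 (p - s) = d)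
    (hsx : 0 < s.1)
    (hden : Real.sqrt (1 + Real.tan θ ^ 2) * d - p.1 - Real.tan θ * p.2 ≠ 0) :
    s.1 = (1 / 2) * (d ^ 2 - p.1 ^ 2 - p.2 ^ 2) /
        (Real.sqrt (1 + Real.tan θ ^ 2) * d - p.1 - Real.tan θ * p.2) ∧
    s.2 = Real.tan θ * s.1 := by
  have hc : Real.cos θ ≠ 0 := ne_of_gt hcos
  have hpy : Real.sin θ ^ 2 + Real.cos θ ^ 2 = 1 := Real.sin_sq_add_cos_sq θ
  -- √(1 + tan² θ) = 1 / cos θ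
  have hsqrt : Real.sqrt (1 + Real.tan θ ^ 2) = 1 / Real.cos θ := by
    have h1 : 1 + Real.tan θ ^ 2 = (1 / Real.cos θ) ^ 2 := by
      rw [Real.tan_eq_sin_div_cos]
      field_simp
      linarith [hpy]
    rw [h1, Real.sqrt_sq (by positivity)]
  -- enorm2 s = t
  have hns : enorm2 s = t := by
    rw [hs]
    simp only [enorm2]
    have : (t * Real.cos θ) ^ 2 + (t * Real.sin θ) ^ 2 = t ^ 2 := by ring_nf; nlinarith
    rw [this, Real.sqrt_sq ht.le]
  have hnps : enorm2 (p - s) = d - t := by linarith [hsum, hns]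
  have hnn : 0 ≤ (p - s).1 ^ 2 + (p - s).2 ^ 2 := by positivity
  have hsq : (p - s).1 ^ 2 + (p - s).2 ^ 2 = (d - t) ^ 2 := by
    have := Real.sq_sqrt hnn
    rw [show Real.sqrt ((p-s).1^2 + (p-s).2^2) = enorm2 (p-s) from rfl, hnps] at this
    linarith
  have hkey : 2 * t * (d - p.1 * Real.cos θ - p.2 * Real.sin θ)
      = d ^ 2 - p.1 ^ 2 - p.2 ^ 2 := by
    rw [hs] at hsq
    simp only [Prod.fst_sub, Prod.snd_sub] at hsq
    linear_combination hsq - t ^ 2 * hpy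
  -- denominator
  have hD : Real.sqrt (1 + Real.tan θ ^ 2) * d - p.1 - Real.tan θ * p.2
      = (d - p.1 * Real.cos θ - p.2 * Real.sin θ) / Real.cos θ := by
    rw [hsqrt, Real.tan_eq_sin_div_cos]
    field_simp
  have hD0 : d - p.1 * Real.cos θ - p.2 * Real.sin θ ≠ 0 := by
    intro h
    apply hden
    rw [hD, h, zero_div]
  constructor
  · rw [hD, hs]
    simp only
    rw [div_div_eq_mul_div, eq_div_iff hD0]
    field_simp
    nlinarith [hkey]
  · rw [hs, Real.tan_eq_sin_div_cos]
    simp only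
    field_simp
end

section
/- In the block-orthogonal case of the previous structure, the (0,0) block of the position CRLB, Σ_{0,0} = T̄_{0,0}ᵀ C_0 T̄_{0,0}, does not depend on the NLOS blocks C_1,…,C_K or T̄_{k,0}, T̄_{k,k} for k ≥ 1; hence PEB_K = PEB_0 when all paths are orthogonal. -/
open Matrix

/-- The `(h,ℓ)`-th `4 × 4` block of a block-partitioned matrix. -/
def blockOf {K : ℕ} (M : Matrix (Fin K × Fin 4) (Fin K × Fin 4) ℝ)
    (h ℓ : Fin K) : Matrix (Fin 4) (Fin 4) ℝ :=
  fun i j => M (h, i) (ℓ, j)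

/-- In the block-orthogonal case, the `(0,0)` block of the position CRLB is
`Σ_{0,0} = T̄_{0,0}ᵀ C_0 T̄_{0,0}` (independent of the NLOS blocks), hence with
`C_0 = (J_{00})⁻¹` the PEB with `K` NLOS paths equals the LOS-only PEB:
`PEB_K = PEB_0`. -/
theorem stmt_13 (K : ℕ)
    (Tinv Jinv : Matrix (Fin (K + 1) × Fin 4) (Fin (K + 1) × Fin 4) ℝ)
    (Tb : Fin (K + 1) → Fin (K + 1) → Matrix (Fin 4) (Fin 4) ℝ)
    (C : Fin (K + 1) → Matrix (Fin 4) (Fin 4) ℝ)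
    (J00 : Matrix (Fin 4) (Fin 4) ℝ)
    (hT : ∀ h ℓ : Fin (K + 1), blockOf Tinv ℓ h = Tb h ℓ)
    (hTzero : ∀ h ℓ : Fin (K + 1), 1 ≤ (ℓ : ℕ) → ℓ ≠ h → Tb h ℓ = 0)
    (hJdiag : ∀ k : Fin (K + 1), blockOf Jinv k k = C k)
    (hJoff : ∀ h ℓ : Fin (K + 1), h ≠ ℓ → blockOf Jinv h ℓ = 0)
    (hC0 : C 0 = J00⁻¹)
    (Sig : Matrix (Fin (K + 1) × Fin 4) (Fin (K + 1) × Fin 4) ℝ)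
    (hSig : Sig = Tinvᵀ * Jinv * Tinv) :
    blockOf Sig 0 0 = (Tb 0 0)ᵀ * J00⁻¹ * Tb 0 0 ∧
    Real.sqrt (blockOf Sig 0 0 2 2 + blockOf Sig 0 0 3 3) =
      Real.sqrt (((Tb 0 0)ᵀ * J00⁻¹ * Tb 0 0) 2 2 +
        ((Tb 0 0)ᵀ * J00⁻¹ * Tb 0 0) 3 3) := by
  have hTinv : ∀ (k : Fin (K+1)) (a j : Fin 4),
      Tinv (k, a) (0, j) = if k = 0 then Tb 0 0 a j else 0 := by
    intro k a j
    have h1 : Tinv (k, a) (0, j) = Tb 0 k a j := by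
      have h2 : blockOf Tinv k 0 a j = Tb 0 k a j := by rw [hT 0 k]
      exact h2
    rw [h1]
    by_cases hk : k = 0
    · simp [hk]
    · have : Tb 0 k = 0 := hTzero 0 k (Fin.pos_of_ne_zero hk) hk
      simp [hk, this]
  have hJ : ∀ (k l : Fin (K+1)) (a b : Fin 4),
      Jinv (k, a) (l, b) = if k = l then C k a b else 0 := by
    intro k l a b
    by_cases hkl : k = l
    · subst hkl
      have h2 : blockOf Jinv k k a b = C k a b := by rw [hJdiag k]
      simpa [blockOf] using h2
    · have h2 : blockOf Jinv k l a b = (0 : Matrix (Fin 4) (Fin 4) ℝ) a b := by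
        rw [hJoff k l hkl]
      simpa [hkl, blockOf] using h2
  have hmain : blockOf Sig 0 0 = (Tb 0 0)ᵀ * J00⁻¹ * Tb 0 0 := by
    rw [← hC0]
    funext i j
    show Sig (0, i) (0, j) = ((Tb 0 0)ᵀ * C 0 * Tb 0 0) i j
    simp only [hSig, Matrix.mul_apply, Matrix.transpose_apply]
    rw [Fintype.sum_prod_type]
    simp only [Fintype.sum_prod_type, hTinv, hJ]
    simp [Finset.mul_sum, Finset.sum_mul, ite_mul, mul_ite, Finset.sum_comm (γ := Fin (K+1))]
  refine ⟨hmain, by rw [hmain]⟩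
end
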